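/- Suppose ρ_n → 0, each Ω_n = {D_i^n : i ∈ I_n} is a ρ_n-cover of Q, and the maps φ_n : I_n → 2^{I_n} satisfy sup_{i∈I_n} dist(⋃_{j∈φ_n(i)} D_j^n, f^{-1}(D_i^n)) → 0 as n → ∞. Then dist(A_{Ω_n}^{φ_n}, A_Q) → 0, i.e. the discrete global attractors converge to A_Q in the one-sided Hausdorff semidistance. -/

import Mathlib

open Filter

/-- One-sided Hausdorff semidistance `dist(X,Y) = sup_{x ∈ X} inf_{y ∈ Y} ‖x - y‖`. -/
noncomputable def sdist {α : Type*} [PseudoMetricSpace α] (X Y : Set α) : ℝ :=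
  ⨆ x ∈ X, Metric.infDist x Y

lemma sdist_nonneg' {α : Type*} [PseudoMetricSpace α] (X Y : Set α) : 0 ≤ sdist X Y :=
  Real.iSup_nonneg fun _ => Real.iSup_nonneg fun _ => Metric.infDist_nonneg

lemma sdist_le' {α : Type*} [PseudoMetricSpace α] {X Y : Set α} {c : ℝ} (hc : 0 ≤ c)
    (h : ∀ x ∈ X, Metric.infDist x Y ≤ c) : sdist X Y ≤ c :=
  Real.iSup_le (fun x => Real.iSup_le (fun hx => h x hx) hc) hc

lemma sdist_empty' {α : Type*} [PseudoMetricSpace α] [Nonempty α] (Y : Set α) :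
    sdist (∅ : Set α) Y = 0 := by
  unfold sdist
  have h : ∀ x : α, (⨆ _ : x ∈ (∅ : Set α), Metric.infDist x Y) = 0 := by
    intro x
    haveI : IsEmpty (x ∈ (∅ : Set α)) := ⟨fun h => h⟩
    exact Real.iSup_of_isEmpty _
  simp only [h, ciSup_const]

lemma infDist_le_sdist {α : Type*} [PseudoMetricSpace α] {X Y : Set α} {x : α}
    (hx : x ∈ X) (hb : ∃ C, ∀ z ∈ X, Metric.infDist z Y ≤ C) :
    Metric.infDist x Y ≤ sdist X Y := by
  obtain ⟨C, hC⟩ := hb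
  have hbdd : BddAbove (Set.range fun z => ⨆ _ : z ∈ X, Metric.infDist z Y) := by
    refine ⟨max C 0, ?_⟩
    rintro r ⟨z, rfl⟩
    dsimp only
    by_cases hz : z ∈ X
    · haveI : Nonempty (z ∈ X) := ⟨hz⟩
      rw [ciSup_const]
      exact le_max_of_le_left (hC z hz)
    · haveI : IsEmpty (z ∈ X) := ⟨hz⟩
      rw [Real.iSup_of_isEmpty]
      exact le_max_right _ _
  have h1 : Metric.infDist x Y = ⨆ _ : x ∈ X, Metric.infDist x Y := by
    haveI : Nonempty (x ∈ X) := ⟨hx⟩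
    rw [ciSup_const]
  rw [h1]
  exact le_ciSup hbdd x

/-- one-step extension of "alive" indices -/
lemma chain_step {I : Type*} [Finite I] (φ : I → Set I) (i : I)
    (h : ∀ k, ((fun S : Set I => ⋃ j ∈ S, φ j)^[k] {i}).Nonempty) :
    ∃ j ∈ φ i, ∀ k, ((fun S : Set I => ⋃ j ∈ S, φ j)^[k] {j}).Nonempty := by
  set g : Set I → Set I := fun S => ⋃ j ∈ S, φ j with hg
  have hgne : ∀ S : Set I, (g S).Nonempty → S.Nonempty := by
    rintro S ⟨x, hx⟩
    rcases Set.mem_iUnion₂.1 hx with ⟨j, hj, -⟩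
    exact ⟨j, hj⟩
  have hdown : ∀ (j : I) (k : ℕ), (g^[k + 1] {j}).Nonempty → (g^[k] {j}).Nonempty := by
    intro j k hk
    rw [Function.iterate_succ_apply'] at hk
    exact hgne _ hk
  have hanti0 : ∀ (j : I) (k m : ℕ), (g^[k + m] {j}).Nonempty → (g^[k] {j}).Nonempty := by
    intro j k m
    induction m with
    | zero => exact id
    | succ m ih => intro h'; exact ih (hdown j (k + m) h')
  have hanti : ∀ (j : I) (k k' : ℕ), k ≤ k' → (g^[k'] {j}).Nonempty → (g^[k] {j}).Nonempty := by
    intro j k k' hkk' h'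
    have := hanti0 j k (k' - k)
    rw [Nat.add_sub_cancel' hkk'] at this
    exact this h'
  have hunion : ∀ (k : ℕ) (S : Set I), g^[k] S = ⋃ j ∈ S, g^[k] {j} := by
    intro k
    induction k with
    | zero => intro S; simp
    | succ k ih =>
      intro S
      rw [Function.iterate_succ_apply, ih (g S)]
      ext x
      simp only [Set.mem_iUnion, Function.iterate_succ_apply]
      constructor
      · rintro ⟨j', hj', hx⟩
        rcases Set.mem_iUnion₂.1 hj' with ⟨j, hjS, hj'φ⟩
        refine ⟨j, hjS, ?_⟩
        have : g {j} = φ j := by simp [hg]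
        rw [this, ih (φ j)]
        exact Set.mem_iUnion₂.2 ⟨j', hj'φ, hx⟩
      · rintro ⟨j, hjS, hx⟩
        have : g {j} = φ j := by simp [hg]
        rw [this, ih (φ j)] at hx
        rcases Set.mem_iUnion₂.1 hx with ⟨j', hj'φ, hx⟩
        exact ⟨j', Set.mem_iUnion₂.2 ⟨j, hjS, hj'φ⟩, hx⟩
  have hsel : ∀ k : ℕ, ∃ j ∈ φ i, (g^[k] {j}).Nonempty := by
    intro k
    have hk := h (k + 1)
    rw [Function.iterate_succ_apply] at hk
    have hgi : g {i} = φ i := by simp [hg]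
    rw [hgi, hunion k (φ i)] at hk
    rcases hk with ⟨x, hx⟩
    rcases Set.mem_iUnion₂.1 hx with ⟨j, hj, hx⟩
    exact ⟨j, hj, ⟨x, hx⟩⟩
  choose F hF1 hF2 using hsel
  obtain ⟨j, hj⟩ := Finite.exists_infinite_fiber F
  have hjinf : (F ⁻¹' {j}).Infinite := Set.infinite_coe_iff.1 hj
  obtain ⟨k₀, hk₀⟩ := hjinf.nonempty
  refine ⟨j, Set.mem_singleton_iff.1 hk₀ ▸ hF1 k₀, ?_⟩
  intro k
  obtain ⟨k', hk'mem, hkk'⟩ := hjinf.exists_gt k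
  have : (g^[k'] {j}).Nonempty := by
    have := hF2 k'
    rwa [show F k' = j from Set.mem_singleton_iff.1 hk'mem] at this
  exact hanti j k k' hkk'.le this

/-- compactness lemma: points `δ`-close to `Z k` for all `k ≤ K` are `ε`-close to `⋂ Z k`. -/
lemma exists_approx {α : Type*} [MetricSpace α] {Q : Set α} (hQ : IsCompact Q)
    (Z : ℕ → Set α) (hZc : ∀ k, IsCompact (Z k)) (hZne : ∀ k, (Z k).Nonempty)
    {ε : ℝ} (hε : 0 < ε) :
    ∃ K : ℕ, ∃ δ : ℝ, 0 < δ ∧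
      ∀ x ∈ Q, (∀ k ≤ K, Metric.infDist x (Z k) ≤ δ) →
        Metric.infDist x (⋂ k, Z k) < ε := by
  set A := ⋂ k, Z k with hA
  set C := Q ∩ {x | ε ≤ Metric.infDist x A} with hC
  have hCc : IsCompact C :=
    hQ.inter_right (isClosed_le continuous_const (Metric.continuous_infDist_pt A))
  have hdisj : C ∩ ⋂ k, Z k = ∅ := by
    rw [Set.eq_empty_iff_forall_notMem]
    rintro x ⟨⟨hxQ, hxd⟩, hxA⟩
    have hxd' : ε ≤ Metric.infDist x A := hxd
    have h0 : Metric.infDist x A = 0 := Metric.infDist_zero_of_mem hxA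
    rw [h0] at hxd'
    exact absurd hxd' (not_le.2 hε)
  obtain ⟨t, ht⟩ := hCc.elim_finite_subfamily_closed Z (fun k => (hZc k).isClosed) hdisj
  set K := t.sup id with hK
  have hsub : ∀ x, x ∈ C → ¬(∀ k ≤ K, x ∈ Z k) := by
    intro x hxC hall
    have : x ∈ C ∩ ⋂ k ∈ t, Z k := by
      refine ⟨hxC, Set.mem_iInter₂.2 fun k hk => hall k (Finset.le_sup (f := id) hk)⟩
    rw [ht] at this
    exact this
  set g : α → ℝ := fun x => ∑ k ∈ Finset.range (K + 1), Metric.infDist x (Z k) with hgdef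
  have hgcont : Continuous g := continuous_finset_sum _ fun k _ => Metric.continuous_infDist_pt _
  by_cases hCne : C.Nonempty
  · obtain ⟨x₀, hx₀C, hmin⟩ := hCc.exists_isMinOn hCne hgcont.continuousOn
    have hgpos : 0 < g x₀ := by
      rcases (Finset.sum_nonneg fun k _ => Metric.infDist_nonneg :
          (0:ℝ) ≤ g x₀).lt_or_eq with h | h
      · exact h
      · exfalso
        have hzero : ∀ k ∈ Finset.range (K + 1), Metric.infDist x₀ (Z k) = 0 := by
          have := (Finset.sum_eq_zero_iff_of_nonneg
            (fun k _ => Metric.infDist_nonneg)).1 h.symm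
          exact this
        refine hsub x₀ hx₀C fun k hk => ?_
        exact ((hZc k).isClosed.mem_iff_infDist_zero (hZne k)).2
          (hzero k (Finset.mem_range.2 (Nat.lt_succ_of_le hk)))
    refine ⟨K, g x₀ / (K + 2), by positivity, ?_⟩
    intro x hxQ hx
    by_contra hcon
    push_neg at hcon
    have hxC : x ∈ C := ⟨hxQ, hcon⟩
    have h1 : g x₀ ≤ g x := hmin hxC
    have h2 : g x ≤ (K + 1) * (g x₀ / (K + 2)) := by
      calc g x ≤ ∑ _k ∈ Finset.range (K + 1), g x₀ / (K + 2) :=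
            Finset.sum_le_sum fun k hk =>
              hx k (Nat.lt_succ_iff.1 (Finset.mem_range.1 hk))
        _ = (K + 1) * (g x₀ / (K + 2)) := by
            rw [Finset.sum_const, Finset.card_range]; ring
    have hK2 : (0:ℝ) < K + 2 := by positivity
    have : (K + 1 : ℝ) * (g x₀ / (K + 2)) < g x₀ := by
      have h3 : (K + 1 : ℝ) / (K + 2) < 1 := by
        rw [div_lt_one hK2]; linarith
      calc (K + 1 : ℝ) * (g x₀ / (K + 2)) = ((K + 1 : ℝ) / (K + 2)) * g x₀ := by ring
        _ < 1 * g x₀ := mul_lt_mul_of_pos_right h3 hgpos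
        _ = g x₀ := one_mul _
    linarith
  · refine ⟨0, 1, one_pos, fun x hxQ _ => ?_⟩
    by_contra hcon
    push_neg at hcon
    exact hCne ⟨x, hxQ, hcon⟩

/-- If `ρ n → 0`, the `Ω n` are `ρ n`-covers of `Q` and the discrete maps `φ n` satisfy
`sup_i dist(⋃_{j ∈ φ n i} D n j, f⁻¹(D n i)) → 0`, then the discrete global attractors
converge to `A_Q` in the one-sided Hausdorff semidistance. -/
theorem discrete_attractors_converge (d : ℕ)
    (f : EuclideanSpace ℝ (Fin d) ≃ₜ EuclideanSpace ℝ (Fin d))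
    (Q : Set (EuclideanSpace ℝ (Fin d))) (hQ : IsCompact Q)
    (I : ℕ → Type) [∀ n, Fintype (I n)]
    (D : ∀ n, I n → Set (EuclideanSpace ℝ (Fin d))) (ρ : ℕ → ℝ)
    (hρ : Tendsto ρ atTop (nhds 0))
    (hcov : ∀ n, Q = ⋃ i, D n i) (hne : ∀ n i, (D n i).Nonempty)
    (hdiam : ∀ n i, Metric.diam (D n i) ≤ ρ n)
    (φ : ∀ n, I n → Set (I n))
    (hφ : Tendsto
      (fun n => ⨆ i : I n, sdist (⋃ j ∈ φ n i, D n j) (⇑f.symm '' D n i))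
      atTop (nhds 0)) :
    Tendsto
      (fun n => sdist
        (⋃ i ∈ {i : I n | ∀ k : ℕ, ((fun S : Set (I n) => ⋃ j ∈ S, φ n j)^[k] {i}).Nonempty},
          D n i)
        (⋂ k : ℕ, (⇑f)^[k] '' Q))
      atTop (nhds 0) := by
  classical
  set X : ℕ → Set (EuclideanSpace ℝ (Fin d)) := fun n =>
    ⋃ i ∈ {i : I n | ∀ k : ℕ, ((fun S : Set (I n) => ⋃ j ∈ S, φ n j)^[k] {i}).Nonempty},
      D n i with hXdef
  rcases Set.eq_empty_or_nonempty Q with hQe | hQne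
  · -- degenerate case: Q is empty, so all I n are empty and X n = ∅
    have hI : ∀ n, IsEmpty (I n) := by
      intro n
      refine ⟨fun i => ?_⟩
      have h1 : D n i ⊆ Q := (hcov n) ▸ Set.subset_iUnion (D n) i
      obtain ⟨x, hx⟩ := hne n i
      exact absurd (h1 hx) (by simp [hQe])
    have hXe : ∀ n, X n = ∅ := by
      intro n
      haveI := hI n
      rw [hXdef]
      haveI := hI n
      simp
    have : (fun n => sdist (X n) (⋂ k : ℕ, (⇑f)^[k] '' Q)) = fun _ => 0 := by
      funext n
      rw [hXe n, sdist_empty']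
    rw [this]
    exact tendsto_const_nhds
  -- main case
  have hQcl : IsClosed Q := hQ.isClosed
  have hDQ : ∀ n i, D n i ⊆ Q := fun n i => (hcov n) ▸ Set.subset_iUnion (D n) i
  have hXQ : ∀ n, X n ⊆ Q := by
    intro n x hx
    rcases Set.mem_iUnion₂.1 hx with ⟨i, -, hxi⟩
    exact hDQ n i hxi
  have hclD : ∀ n i, closure (D n i) ⊆ Q := fun n i => closure_minimal (hDQ n i) hQcl
  have hclDc : ∀ n i, IsCompact (closure (D n i)) := fun n i =>
    hQ.of_isClosed_subset isClosed_closure (hclD n i)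
  have hfit : ∀ k : ℕ, Continuous ((⇑f)^[k]) := fun k => f.continuous.iterate k
  have hZc : ∀ k : ℕ, IsCompact ((⇑f)^[k] '' Q) := fun k => hQ.image (hfit k)
  have hZne : ∀ k : ℕ, ((⇑f)^[k] '' Q).Nonempty := fun k => hQne.image _
  -- bound from hφ
  set δ : ℕ → ℝ := fun n => ⨆ i : I n, sdist (⋃ j ∈ φ n i, D n j) (⇑f.symm '' D n i) with hδdef
  have hδi : ∀ n (i : I n),
      sdist (⋃ j ∈ φ n i, D n j) (⇑f.symm '' D n i) ≤ δ n := by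
    intro n i
    rw [hδdef]
    exact le_ciSup (Set.Finite.bddAbove
      (Set.finite_range (fun i : I n => sdist (⋃ j ∈ φ n i, D n j) (⇑f.symm '' D n i)))) i
  have hmemδ : ∀ n (i₀ : I n) (x₁ : EuclideanSpace ℝ (Fin d)), x₁ ∈ ⋃ j ∈ φ n i₀, D n j →
      Metric.infDist x₁ (⇑f.symm '' D n i₀) ≤ δ n := by
    intro n i₀ x₁ hx₁
    refine le_trans (infDist_le_sdist hx₁ ?_) (hδi n i₀)
    obtain ⟨y₀, hy₀⟩ := (hne n i₀).image (⇑f.symm)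
    obtain ⟨r, hr⟩ := hQ.isBounded.subset_closedBall y₀
    refine ⟨r, fun z hz => ?_⟩
    have hzQ : z ∈ Q := by
      rcases Set.mem_iUnion₂.1 hz with ⟨j, -, hzj⟩
      exact hDQ n j hzj
    exact le_trans (Metric.infDist_le_dist_of_mem hy₀) (hr hzQ)
  -- the key induction
  have main : ∀ (K : ℕ) (ε : ℝ), 0 < ε → ∀ᶠ n in atTop,
      ∀ x ∈ X n, Metric.infDist x ((⇑f)^[K] '' Q) ≤ ε := by
    intro K
    induction K with
    | zero =>
      intro ε hε
      filter_upwards with n x hx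
      have : x ∈ (⇑f)^[0] '' Q := by
        simpa using hXQ n hx
      rw [Metric.infDist_zero_of_mem this]
      exact hε.le
    | succ K ih =>
      intro ε hε
      set RK : Set (EuclideanSpace ℝ (Fin d)) := (⇑f)^[K] '' Q ∪ ⇑f.symm '' Q with hRK
      have hRKc : IsCompact RK := (hZc K).union (hQ.image f.symm.continuous)
      have hUC := hRKc.uniformContinuousOn_of_continuous f.continuous.continuousOn
      rw [Metric.uniformContinuousOn_iff] at hUC
      obtain ⟨θ, hθ, hUC⟩ := hUC (ε / 2) (by positivity)
      filter_upwards [ih (θ / 4) (by positivity),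
        hφ.eventually (gt_mem_nhds (show (0:ℝ) < θ / 4 by positivity)),
        hρ.eventually (gt_mem_nhds (half_pos hε))] with n hihn hδn hρn
      intro x hx
      rcases Set.mem_iUnion₂.1 hx with ⟨i₀, hi₀S, hxD⟩
      obtain ⟨i₁, hi₁φ, hi₁S⟩ := chain_step (φ n) i₀ hi₀S
      obtain ⟨x₁, hx₁⟩ := hne n i₁
      have hx₁X : x₁ ∈ X n := Set.mem_biUnion hi₁S hx₁
      -- x₁ is close to f^[K] '' Q
      obtain ⟨p, hp, hpd⟩ := (hZc K).exists_infDist_eq_dist (hZne K) x₁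
      have hx₁p : dist x₁ p ≤ θ / 4 := hpd ▸ hihn x₁ hx₁X
      -- x₁ is close to f.symm '' closure (D n i₀)
      have hx₁U : x₁ ∈ ⋃ j ∈ φ n i₀, D n j := Set.mem_biUnion hi₁φ hx₁
      have hTne : (⇑f.symm '' closure (D n i₀)).Nonempty :=
        ((hne n i₀).mono subset_closure).image _
      have hTc : IsCompact (⇑f.symm '' closure (D n i₀)) :=
        (hclDc n i₀).image f.symm.continuous
      have h2 : Metric.infDist x₁ (⇑f.symm '' closure (D n i₀)) ≤ δ n :=
        le_trans (Metric.infDist_le_infDist_of_subset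
          (Set.image_mono subset_closure) ((hne n i₀).image _)) (hmemδ n i₀ x₁ hx₁U)
      obtain ⟨y, hy, hyd⟩ := hTc.exists_infDist_eq_dist hTne x₁
      have hx₁y : dist x₁ y ≤ δ n := hyd ▸ h2
      obtain ⟨z, hz, hzy⟩ := hy
      have hfy : f y = z := by rw [← hzy]; exact f.apply_symm_apply z
      -- dist x (f y) ≤ ρ n
      have hbd : Bornology.IsBounded (closure (D n i₀)) := (hclDc n i₀).isBounded
      have hdist_x_fy : dist x (f y) ≤ ρ n := by
        rw [hfy]
        calc dist x z ≤ Metric.diam (closure (D n i₀)) :=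
              Metric.dist_le_diam_of_mem hbd (subset_closure hxD) hz
          _ = Metric.diam (D n i₀) := Metric.diam_closure _
          _ ≤ ρ n := hdiam n i₀
      -- uniform continuity step
      have hyR : y ∈ RK := Or.inr ⟨z, hclD n i₀ hz, hzy⟩
      have hpR : p ∈ RK := Or.inl hp
      have hyp : dist y p < θ := by
        have : dist y p ≤ dist y x₁ + dist x₁ p := dist_triangle _ _ _
        rw [dist_comm y x₁] at this
        have hδn4 : δ n < θ / 4 := hδn
        linarith
      have hfyfp : dist (f y) (f p) < ε / 2 := hUC y hyR p hpR hyp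
      -- conclude
      have hfp : f p ∈ (⇑f)^[K + 1] '' Q := by
        obtain ⟨q, hq, hpq⟩ := hp
        exact ⟨q, hq, by rw [Function.iterate_succ_apply', hpq]⟩
      have : Metric.infDist x ((⇑f)^[K + 1] '' Q) ≤ dist x (f p) :=
        Metric.infDist_le_dist_of_mem hfp
      have htri : dist x (f p) ≤ dist x (f y) + dist (f y) (f p) := dist_triangle _ _ _
      have hρn2 : ρ n < ε / 2 := hρn
      linarith
  -- conclusion
  rw [Metric.tendsto_atTop]
  intro ε hε
  obtain ⟨K, δ₀, hδ₀, hKey⟩ := exists_approx hQ (fun k => (⇑f)^[k] '' Q) hZc hZne (half_pos hε)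
  have hall : ∀ᶠ n in atTop, ∀ k : Fin (K + 1),
      ∀ x ∈ X n, Metric.infDist x ((⇑f)^[(k : ℕ)] '' Q) ≤ δ₀ :=
    eventually_all.2 fun k => main k δ₀ hδ₀
  obtain ⟨N, hN⟩ := eventually_atTop.1 hall
  refine ⟨N, fun n hn => ?_⟩
  have hx' : ∀ x ∈ X n, Metric.infDist x (⋂ k : ℕ, (⇑f)^[k] '' Q) ≤ ε / 2 := by
    intro x hx
    refine (hKey x (hXQ n hx) fun k hk => ?_).le
    exact hN n hn ⟨k, Nat.lt_succ_of_le hk⟩ x hx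
  have hle : sdist (X n) (⋂ k : ℕ, (⇑f)^[k] '' Q) ≤ ε / 2 :=
    sdist_le' (by positivity) hx'
  rw [Real.dist_eq, sub_zero, abs_of_nonneg (sdist_nonneg' _ _)]
  linarith
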